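/- Under the change of variables v_k = μ_k + ε_k with ε_k ~ N(0,Σ) i.i.d., the importance weight satisfies p_*(V)/p_M(V) = (1/η)·exp(−(1/λ)·S(M,E)) where S(M,E) = J(M+E) + (λ/2)·Σ_{k=0}^{N−1} μ_k^T Σ^{-1}(μ_k + 2ε_k), and consequently the normalizer satisfies η = E_{P_M}[exp(−S(M,E)/λ)]. -/

import Mathlib

open Real MeasureTheory Matrix Finset

/-- Density of the product Gaussian with block means `M k` and common positive
definite covariance `S`. -/
noncomputable def gaussDensity {m N : ℕ} (S : Matrix (Fin m) (Fin m) ℝ)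
    (M : Fin N → Fin m → ℝ) (V : Fin N → Fin m → ℝ) : ℝ :=
  ((2 * Real.pi) ^ m * S.det) ^ (-(N : ℝ) / 2) *
    Real.exp (-(1 / 2) * ∑ k, (V k - M k) ⬝ᵥ (S⁻¹ *ᵥ (V k - M k)))

/-- The MPPI cost `S(M, E) = J(M+E) + (λ/2) Σ_k μ_k^T Σ⁻¹ (μ_k + 2 ε_k)`. -/
noncomputable def mppiCost {m N : ℕ} (S : Matrix (Fin m) (Fin m) ℝ)
    (J : (Fin N → Fin m → ℝ) → ℝ) (lam : ℝ)
    (M E : Fin N → Fin m → ℝ) : ℝ :=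
  J (M + E) + (lam / 2) * ∑ k, M k ⬝ᵥ (S⁻¹ *ᵥ (M k + 2 • E k))

lemma quad_expand {m : ℕ} (A : Matrix (Fin m) (Fin m) ℝ) (hA : Aᵀ = A)
    (x y : Fin m → ℝ) :
    (x + y) ⬝ᵥ (A *ᵥ (x + y)) = y ⬝ᵥ (A *ᵥ y) + x ⬝ᵥ (A *ᵥ (x + 2 • y)) := by
  have hsym : y ⬝ᵥ (A *ᵥ x) = x ⬝ᵥ (A *ᵥ y) := by
    rw [Matrix.dotProduct_mulVec, ← Matrix.mulVec_transpose, hA, dotProduct_comm]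
  simp only [Matrix.mulVec_add, Matrix.mulVec_smul, add_dotProduct,
    dotProduct_add, dotProduct_smul, smul_eq_mul, nsmul_eq_mul, two_smul]
  linarith

lemma gaussDensity_pos {m N : ℕ} {S : Matrix (Fin m) (Fin m) ℝ} (hS : S.PosDef)
    (M V : Fin N → Fin m → ℝ) : 0 < gaussDensity S M V := by
  unfold gaussDensity
  have h : (0:ℝ) < (2 * Real.pi) ^ m * S.det :=
    mul_pos (pow_pos (by positivity) m) hS.det_pos
  exact mul_pos (Real.rpow_pos_of_pos h _) (Real.exp_pos _)

open scoped NNReal ENNReal in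
lemma gaussDensity_continuous {m N : ℕ} (S : Matrix (Fin m) (Fin m) ℝ)
    (M : Fin N → Fin m → ℝ) : Continuous (gaussDensity S M) := by
  have happ : ∀ (k : Fin N) (i : Fin m),
      Continuous fun V : Fin N → Fin m → ℝ => V k i := fun k i =>
    (continuous_apply i).comp (continuous_apply k)
  unfold gaussDensity
  refine continuous_const.mul (Real.continuous_exp.comp (continuous_const.mul ?_))
  refine continuous_finset_sum _ fun k _ => ?_
  simp only [dotProduct, Matrix.mulVec, Pi.sub_apply]
  exact continuous_finset_sum _ fun i _ =>
    ((happ k i).sub continuous_const).mul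
      (continuous_finset_sum _ fun j _ =>
        continuous_const.mul ((happ k j).sub continuous_const))

open scoped NNReal ENNReal

theorem importance_weight_change_of_variables {m N : ℕ}
    (S : Matrix (Fin m) (Fin m) ℝ) (hS : S.PosDef)
    (J : (Fin N → Fin m → ℝ) → ℝ) (hJ : Measurable J)
    (lam : ℝ) (hlam : 0 < lam)
    (M : Fin N → Fin m → ℝ)
    (P₀ PM : Measure (Fin N → Fin m → ℝ))
    (hP₀ : P₀ = volume.withDensity (fun V => ENNReal.ofReal (gaussDensity S 0 V)))
    (hPM : PM = volume.withDensity (fun V => ENNReal.ofReal (gaussDensity S M V)))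
    (η : ℝ) (hη : η = ∫ V, Real.exp (-J V / lam) ∂P₀) (hη0 : 0 < η)
    (hηfin : Integrable (fun V => Real.exp (-J V / lam)) P₀) :
    (∀ E : Fin N → Fin m → ℝ,
      (Real.exp (-J (M + E) / lam) * gaussDensity S 0 (M + E) / η) /
          gaussDensity S M (M + E) =
        (1 / η) * Real.exp (-(mppiCost S J lam M E) / lam)) ∧
      η = ∫ V, Real.exp (-(mppiCost S J lam M (V - M)) / lam) ∂PM := by
  have hAsym : (S⁻¹)ᵀ = S⁻¹ := by
    have h := hS.isHermitian.inv
    rwa [Matrix.IsHermitian, Matrix.conjTranspose_eq_transpose_of_trivial] at h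
  -- ratio of densities
  have hratio : ∀ E : Fin N → Fin m → ℝ,
      gaussDensity S 0 (M + E) = gaussDensity S M (M + E) *
        Real.exp (-(1 / 2) * ∑ k, M k ⬝ᵥ (S⁻¹ *ᵥ (M k + 2 • E k))) := by
    intro E
    unfold gaussDensity
    have hsum : ∑ k, ((M + E) k - (0 : Fin N → Fin m → ℝ) k) ⬝ᵥ
          (S⁻¹ *ᵥ ((M + E) k - (0 : Fin N → Fin m → ℝ) k)) =
        (∑ k, ((M + E) k - M k) ⬝ᵥ (S⁻¹ *ᵥ ((M + E) k - M k))) +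
        ∑ k, M k ⬝ᵥ (S⁻¹ *ᵥ (M k + 2 • E k)) := by
      rw [← Finset.sum_add_distrib]
      refine Finset.sum_congr rfl fun k _ => ?_
      have h1 : (M + E) k - (0 : Fin N → Fin m → ℝ) k = M k + E k := by
        simp [Pi.add_apply]
      have h2 : (M + E) k - M k = E k := by simp [Pi.add_apply]
      rw [h1, h2, quad_expand S⁻¹ hAsym (M k) (E k)]
    rw [hsum, mul_add, Real.exp_add, ← mul_assoc]
  have part1 : ∀ E : Fin N → Fin m → ℝ,
      (Real.exp (-J (M + E) / lam) * gaussDensity S 0 (M + E) / η) /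
          gaussDensity S M (M + E) =
        (1 / η) * Real.exp (-(mppiCost S J lam M E) / lam) := by
    intro E
    have hg : 0 < gaussDensity S M (M + E) := gaussDensity_pos hS M (M + E)
    have key : Real.exp (-(mppiCost S J lam M E) / lam) =
        Real.exp (-J (M + E) / lam) *
          Real.exp (-(1 / 2) * ∑ k, M k ⬝ᵥ (S⁻¹ *ᵥ (M k + 2 • E k))) := by
      rw [← Real.exp_add]
      congr 1
      unfold mppiCost
      field_simp
      ring
    rw [hratio E, key]
    field_simp
  refine ⟨part1, ?_⟩
  -- Part 2
  have hmeas0 : Measurable fun V : Fin N → Fin m → ℝ => Real.toNNReal (gaussDensity S 0 V) :=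
    ((gaussDensity_continuous S 0).measurable).real_toNNReal
  have hmeasM : Measurable fun V : Fin N → Fin m → ℝ => Real.toNNReal (gaussDensity S M V) :=
    ((gaussDensity_continuous S M).measurable).real_toNNReal
  have hpoint : ∀ V : Fin N → Fin m → ℝ,
      gaussDensity S M V * Real.exp (-(mppiCost S J lam M (V - M)) / lam) =
        gaussDensity S 0 V * Real.exp (-J V / lam) := by
    intro V
    have h := part1 (V - M)
    have hMV : M + (V - M) = V := by abel
    rw [hMV] at h
    have hg : gaussDensity S M V ≠ 0 := (gaussDensity_pos hS M V).ne'
    field_simp at h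
    simp only [← neg_div] at h
    have h2 := mul_right_cancel₀ hη0.ne'
      (show (Real.exp (-J V / lam) * gaussDensity S 0 V) * η =
        (Real.exp (-(mppiCost S J lam M (V - M)) / lam) * gaussDensity S M V) * η by
          linear_combination η * h)
    linear_combination -h2
  rw [hη, hP₀, hPM]
  rw [show (fun V => ENNReal.ofReal (gaussDensity S 0 V)) =
    fun V => ((Real.toNNReal (gaussDensity S 0 V) : ℝ≥0) : ℝ≥0∞) from rfl]
  rw [show (fun V => ENNReal.ofReal (gaussDensity S M V)) =
    fun V => ((Real.toNNReal (gaussDensity S M V) : ℝ≥0) : ℝ≥0∞) from rfl]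
  rw [integral_withDensity_eq_integral_smul hmeas0,
    integral_withDensity_eq_integral_smul hmeasM]
  refine integral_congr_ae (Filter.Eventually.of_forall fun V => ?_)
  have h0 : (0:ℝ) ≤ gaussDensity S 0 V := (gaussDensity_pos hS 0 V).le
  have hM : (0:ℝ) ≤ gaussDensity S M V := (gaussDensity_pos hS M V).le
  simp only [NNReal.smul_def, Real.coe_toNNReal _ h0, Real.coe_toNNReal _ hM]
  exact (hpoint V).symm
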